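/- Let M₁, M₂, …, M_L be D×D nonsingular integer matrices that are pairwise commutative and pairwise coprime, and let R = M₁M₂⋯M_L U for any unimodular matrix U, which is an lcrm of the M_i. For each i set W_i = M₁⋯M_{i−1}M_{i+1}⋯M_L and let Ŵ_i be an integer matrix satisfying W_iŴ_i + M_iQ_i = I for some integer matrix Q_i. Then every integer vector m ∈ 𝒩(R) is uniquely reconstructed from its remainders r_i = ⟨m⟩_{M_i} as m = ⟨ Σ_{i=1}^{L} W_iŴ_i r_i ⟩_R. (CC MD-CRT for integer vectors.) -/

import Mathlib

open Matrix

/-- An integer matrix is unimodular if its determinant is `1` or `-1`. -/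
def Unimod {D : ℕ} (U : Matrix (Fin D) (Fin D) ℤ) : Prop := U.det = 1 ∨ U.det = -1

/-- `C` is a common right multiple (crm) of the family `M`. -/
def IsCRM {D n : ℕ} (M : Fin n → Matrix (Fin D) (Fin D) ℤ)
    (C : Matrix (Fin D) (Fin D) ℤ) : Prop :=
  C.det ≠ 0 ∧ ∀ i, ∃ Q : Matrix (Fin D) (Fin D) ℤ, C = M i * Q

/-- `C` is a least common right multiple (lcrm) of the family `M`. -/
def IsLCRM {D n : ℕ} (M : Fin n → Matrix (Fin D) (Fin D) ℤ)
    (C : Matrix (Fin D) (Fin D) ℤ) : Prop :=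
  IsCRM M C ∧ ∀ C', IsCRM M C' → ∃ P : Matrix (Fin D) (Fin D) ℤ, C' = C * P

/-- `C` is a common left multiple (clm) of the family `M`. -/
def IsCLM {D n : ℕ} (M : Fin n → Matrix (Fin D) (Fin D) ℤ)
    (C : Matrix (Fin D) (Fin D) ℤ) : Prop :=
  C.det ≠ 0 ∧ ∀ i, ∃ Q : Matrix (Fin D) (Fin D) ℤ, C = Q * M i

/-- `C` is a least common left multiple (lclm) of the family `M`. -/
def IsLCLM {D n : ℕ} (M : Fin n → Matrix (Fin D) (Fin D) ℤ)
    (C : Matrix (Fin D) (Fin D) ℤ) : Prop :=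
  IsCLM M C ∧ ∀ C', IsCLM M C' → ∃ P : Matrix (Fin D) (Fin D) ℤ, C' = P * C

/-- `B` is a common left divisor (cld) of the family `M`. -/
def IsCLD {D n : ℕ} (M : Fin n → Matrix (Fin D) (Fin D) ℤ)
    (B : Matrix (Fin D) (Fin D) ℤ) : Prop :=
  B.det ≠ 0 ∧ ∀ i, ∃ K : Matrix (Fin D) (Fin D) ℤ, M i = B * K

/-- `B` is a greatest common left divisor (gcld) of the family `M`:
`B` is a cld, and every cld of the family is a left divisor of `B`. -/
def IsGCLD {D n : ℕ} (M : Fin n → Matrix (Fin D) (Fin D) ℤ)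
    (B : Matrix (Fin D) (Fin D) ℤ) : Prop :=
  IsCLD M B ∧ ∀ B', IsCLD M B' → ∃ K : Matrix (Fin D) (Fin D) ℤ, B = B' * K

/-- `A` and `B` are left coprime: every (nonsingular) common left divisor is unimodular. -/
def LeftCoprime {D : ℕ} (A B : Matrix (Fin D) (Fin D) ℤ) : Prop :=
  ∀ C : Matrix (Fin D) (Fin D) ℤ, C.det ≠ 0 →
    (∃ K, A = C * K) → (∃ K, B = C * K) → Unimod C

/-- `A` and `B` are right coprime: every (nonsingular) common right divisor is unimodular. -/
def RightCoprime {D : ℕ} (A B : Matrix (Fin D) (Fin D) ℤ) : Prop :=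
  ∀ C : Matrix (Fin D) (Fin D) ℤ, C.det ≠ 0 →
    (∃ K, A = K * C) → (∃ K, B = K * C) → Unimod C

/-- `A` and `B` are coprime (for commuting matrices left and right coprimeness coincide). -/
def MatCoprime {D : ℕ} (A B : Matrix (Fin D) (Fin D) ℤ) : Prop :=
  LeftCoprime A B ∧ RightCoprime A B

/-- The lattice generated by an integer matrix `M`: all integer combinations `M n`. -/
def LAT {D : ℕ} (M : Matrix (Fin D) (Fin D) ℤ) : Set (Fin D → ℤ) :=
  {v | ∃ n : Fin D → ℤ, v = M.mulVec n}

/-- `𝒩(M)`: the integer vectors of the form `M x` with `x ∈ [0,1)^D`. -/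
def NSet {D : ℕ} (M : Matrix (Fin D) (Fin D) ℤ) : Set (Fin D → ℤ) :=
  {k | ∃ x : Fin D → ℚ, (∀ j, 0 ≤ x j ∧ x j < 1) ∧
      (M.map (Int.cast : ℤ → ℚ)).mulVec x = fun j => (k j : ℚ)}

/-- `r` is the remainder of `m` modulo `M`: `r ∈ 𝒩(M)` and `m − r ∈ LAT(M)`. -/
def IsRem {D : ℕ} (M : Matrix (Fin D) (Fin D) ℤ) (m r : Fin D → ℤ) : Prop :=
  r ∈ NSet M ∧ (m - r) ∈ LAT M

/-- The Euclidean norm on `ℝ^D`. -/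
noncomputable def euclNorm {D : ℕ} (v : Fin D → ℝ) : ℝ := Real.sqrt (∑ j, (v j) ^ 2)

/-- The lattice generated by a real matrix `M`: all integer combinations `M n`. -/
def LATR {D : ℕ} (M : Matrix (Fin D) (Fin D) ℝ) : Set (Fin D → ℝ) :=
  {v | ∃ n : Fin D → ℤ, v = M.mulVec (fun j => (n j : ℝ))}


section Stmt10Aux

open Matrix

private lemma stmt10_mulVecLin_inj {D : ℕ} {A : Matrix (Fin D) (Fin D) ℤ} (hA : A.det ≠ 0) :
    Function.Injective A.mulVecLin := by
  intro x y hxy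
  have h : A.mulVec (x - y) = 0 := by
    simp only [Matrix.mulVecLin_apply] at hxy
    rw [Matrix.mulVec_sub, hxy, sub_self]
  have h2 : A.det • (x - y) = 0 := by
    have := congrArg (A.adjugate.mulVec) h
    rwa [Matrix.mulVec_mulVec, Matrix.adjugate_mul, Matrix.smul_mulVec,
      Matrix.one_mulVec, Matrix.mulVec_zero] at this
  rcases smul_eq_zero.mp h2 with h3 | h3
  · exact absurd h3 hA
  · exact sub_eq_zero.mp h3

private lemma stmt10_finiteQuot {D : ℕ} {A : Matrix (Fin D) (Fin D) ℤ} (hA : A.det ≠ 0) :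
    Finite ((Fin D → ℤ) ⧸ LinearMap.range A.mulVecLin) := by
  have e : (LinearMap.range A.mulVecLin) ≃ₗ[ℤ] (Fin D → ℤ) :=
    (LinearEquiv.ofInjective A.mulVecLin (stmt10_mulVecLin_inj hA)).symm
  exact Nat.finite_of_card_ne_zero
    (Int.submodule_toAddSubgroup_index_ne_zero_iff.mpr ⟨e⟩)

private lemma stmt10_pair {D : ℕ} {A B : Matrix (Fin D) (Fin D) ℤ} (hB : B.det ≠ 0)
    (hAB : A * B = B * A) {Ah Bh : Matrix (Fin D) (Fin D) ℤ}
    (hbez : A * Ah + B * Bh = 1) {v : Fin D → ℤ}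
    (ha : v ∈ LinearMap.range A.mulVecLin) (hb : v ∈ LinearMap.range B.mulVecLin) :
    v ∈ LinearMap.range (A * B).mulVecLin := by
  obtain ⟨a, ha⟩ := ha
  obtain ⟨b, hb⟩ := hb
  set LB := LinearMap.range B.mulVecLin with hLB
  have hle : LB ≤ LB.comap A.mulVecLin := by
    rintro _ ⟨c, rfl⟩
    refine ⟨A.mulVec c, ?_⟩
    simp only [Matrix.mulVecLin_apply, Matrix.mulVec_mulVec, hAB]
  set φ := LB.mapQ LB A.mulVecLin hle with hφ
  have hsurj : Function.Surjective φ := by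
    intro y
    obtain ⟨x, rfl⟩ := Submodule.Quotient.mk_surjective _ y
    refine ⟨Submodule.Quotient.mk (Ah.mulVec x), ?_⟩
    rw [hφ, Submodule.mapQ_apply, Submodule.Quotient.eq]
    refine ⟨-(Bh.mulVec x), ?_⟩
    have h1 : (A * Ah + B * Bh).mulVec x = x := by rw [hbez, Matrix.one_mulVec]
    rw [Matrix.add_mulVec] at h1
    show B.mulVecLin (-(Bh.mulVec x)) = A.mulVecLin (Ah.mulVec x) - x
    simp only [Matrix.mulVecLin_apply, Matrix.mulVec_neg, Matrix.mulVec_mulVec]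
    linear_combination (norm := module) -h1
  haveI := stmt10_finiteQuot hB
  have hinj : Function.Injective φ := Finite.injective_iff_surjective.mpr hsurj
  have h0 : φ (Submodule.Quotient.mk a) = φ 0 := by
    rw [map_zero, hφ, Submodule.mapQ_apply]
    have hab : A.mulVecLin a = B.mulVecLin b := by rw [ha, hb]
    rw [hab]
    exact (Submodule.Quotient.mk_eq_zero _).mpr ⟨b, rfl⟩
  obtain ⟨c, hc⟩ := (Submodule.Quotient.mk_eq_zero _).mp (hinj h0)
  refine ⟨c, ?_⟩
  have hc' : B.mulVec c = a := by simpa using hc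
  rw [Matrix.mulVecLin_apply, ← Matrix.mulVec_mulVec, hc']
  simpa using ha

private lemma stmt10_mem_eraseIdx {D L : ℕ} (M : Fin L → Matrix (Fin D) (Fin D) ℤ)
    (i j : Fin L) (hij : i ≠ j) : M i ∈ (List.ofFn M).eraseIdx j := by
  rw [List.eraseIdx_eq_take_drop_succ]
  rcases lt_or_gt_of_ne (Fin.val_ne_of_ne hij) with h | h
  · apply List.mem_append_left
    have hlen : (i : ℕ) < ((List.ofFn M).take j).length := by
      simp [List.length_take, Nat.lt_min, h, i.isLt]
    have : ((List.ofFn M).take j)[(i:ℕ)] = M i := by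
      rw [List.getElem_take]
      simp
    exact this ▸ List.getElem_mem hlen
  · apply List.mem_append_right
    have hlen : (i : ℕ) - (j + 1) < ((List.ofFn M).drop (j + 1)).length := by
      simp only [List.length_drop, List.length_ofFn]
      omega
    have : ((List.ofFn M).drop ((j:ℕ) + 1))[(i:ℕ) - (j + 1)] = M i := by
      rw [List.getElem_drop]
      have : (j:ℕ) + 1 + ((i:ℕ) - (j + 1)) = i := by omega
      simp [this]
    exact this ▸ List.getElem_mem hlen

end Stmt10Aux

/-- CC MD-CRT for integer vectors — pairwise commutative and coprime
moduli; `m = ⟨ Σᵢ Wᵢ Ŵᵢ rᵢ ⟩_R`. -/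
theorem stmt10 {D L : ℕ} (hL : 1 ≤ L)
    (M : Fin L → Matrix (Fin D) (Fin D) ℤ) (hM : ∀ i, (M i).det ≠ 0)
    (hcomm : ∀ i j, M i * M j = M j * M i)
    (hcop : ∀ i j, i ≠ j → MatCoprime (M i) (M j))
    (U : Matrix (Fin D) (Fin D) ℤ) (hU : Unimod U)
    (R : Matrix (Fin D) (Fin D) ℤ) (hR : R = (List.ofFn M).prod * U)
    (W Wh : Fin L → Matrix (Fin D) (Fin D) ℤ)
    (hW : ∀ i, W i = ((List.ofFn M).eraseIdx i.val).prod)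
    (hWh : ∀ i, ∃ Q : Matrix (Fin D) (Fin D) ℤ, W i * Wh i + M i * Q = 1)
    (m : Fin D → ℤ) (hm : m ∈ NSet R)
    (r : Fin L → Fin D → ℤ) (hr : ∀ i, IsRem (M i) m (r i)) :
    IsRem R (∑ i, (W i * Wh i).mulVec (r i)) m := by
    classical
  refine ⟨hm, ?_⟩
  set P := List.ofFn M with hP
  have hpw : P.Pairwise Commute := by
    rw [hP, List.pairwise_ofFn]
    intro i j _
    exact hcomm i j
  set v : Fin D → ℤ := (∑ i, (W i * Wh i).mulVec (r i)) - m with hv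
  have stepA : ∀ i : Fin L, v ∈ LinearMap.range (M i).mulVecLin := by
    intro i
    have hsplit : (∑ j, (W j * Wh j).mulVec (r j))
        = (W i * Wh i).mulVec (r i) + ∑ j ∈ Finset.univ.erase i, (W j * Wh j).mulVec (r j) :=
      (Finset.add_sum_erase _ _ (Finset.mem_univ i)).symm
    have hv' : v = ((W i * Wh i).mulVec (r i) - m)
        + ∑ j ∈ Finset.univ.erase i, (W j * Wh j).mulVec (r j) := by
      rw [hv, hsplit]; abel
    rw [hv']
    refine Submodule.add_mem _ ?_ (Submodule.sum_mem _ ?_)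
    · obtain ⟨Q, hQ⟩ := hWh i
      have h1 : W i * Wh i = 1 - M i * Q := eq_sub_of_add_eq hQ
      obtain ⟨n, hn⟩ := (hr i).2
      refine ⟨-(n + Q.mulVec (r i)), ?_⟩
      simp only [Matrix.mulVecLin_apply, Matrix.mulVec_neg, Matrix.mulVec_add, h1,
        Matrix.sub_mulVec, Matrix.one_mulVec, Matrix.mulVec_mulVec]
      linear_combination (norm := module) hn
    · intro j hj
      have hij : i ≠ j := (Finset.ne_of_mem_erase hj).symm
      have hmem : M i ∈ P.eraseIdx (j : ℕ) := stmt10_mem_eraseIdx M i j hij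
      have hpw' : (P.eraseIdx (j : ℕ)).Pairwise Commute :=
        hpw.sublist (List.eraseIdx_sublist _ _)
      have ht : (P.eraseIdx (j : ℕ)).prod = M i * ((P.eraseIdx (j : ℕ)).erase (M i)).prod := by
        rw [(List.perm_cons_erase hmem).prod_eq' hpw', List.prod_cons]
      refine ⟨(((P.eraseIdx (j : ℕ)).erase (M i)).prod * Wh j).mulVec (r j), ?_⟩
      rw [Matrix.mulVecLin_apply, Matrix.mulVec_mulVec, ← Matrix.mul_assoc, ← ht, ← hW j]
  have stepB : ∀ k : ℕ, k ≤ L → v ∈ LinearMap.range ((P.take k).prod).mulVecLin := by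
    intro k
    induction k with
    | zero => exact fun _ => ⟨v, by simp⟩
    | succ k ih =>
      intro hk1
      have hk : k < L := hk1
      have ihv := ih (le_of_lt hk)
      set i : Fin L := ⟨k, hk⟩ with hi
      obtain ⟨Q, hQ⟩ := hWh i
      have hsplitW : W i = ((P.take k).prod) * (P.drop (k+1)).prod := by
        rw [hW i, List.eraseIdx_eq_take_drop_succ, List.prod_append]
      have hbez : ((P.take k).prod) * ((P.drop (k+1)).prod * Wh i) + M i * Q = 1 := by
        rw [← Matrix.mul_assoc, ← hsplitW]; exact hQ
      have hcomm' : Commute (M i) ((P.take k).prod) := by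
        apply Commute.list_prod_right
        intro x hx
        obtain ⟨j, rfl⟩ := List.mem_ofFn.mp (List.take_subset _ _ (hP ▸ hx))
        exact hcomm i j
      have hres := stmt10_pair (hM i) hcomm'.symm.eq hbez ihv (stepA i)
      have hts : ((P.take (k+1)).prod) = ((P.take k).prod) * M i := by
        rw [List.prod_take_succ _ _ (by simp [hP, hk])]
        congr 1
        simp [hP]
        rfl
      rw [hts]
      exact hres
  have hfin : v ∈ LinearMap.range (P.prod).mulVecLin := by
    have h := stepB L le_rfl
    rwa [List.take_of_length_le (by simp [hP])] at h
  obtain ⟨n, hn⟩ := hfin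
  have hUV : U * (U.det • U.adjugate) = 1 := by
    rw [Matrix.mul_smul, Matrix.mul_adjugate, smul_smul]
    rcases hU with h | h <;> rw [h] <;> norm_num
  refine ⟨(U.det • U.adjugate).mulVec n, ?_⟩
  rw [hR, Matrix.mulVec_mulVec, Matrix.mul_assoc, hUV, Matrix.mul_one]
  simpa using hn.symm
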